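/- Let A, Q ⊆ ℝ³ be periodic point sets with a common full-rank lattice Λ and unit cell U, with motifs M_A = A ∩ U and M_Q = Q ∩ U of equal cardinality m, and suppose there is a bijection γ: M_A → M_Q with ‖a − γ(a)‖ ≤ δ for all a ∈ M_A, extended Λ-periodically. Then for all k ≥ 0 and t ≥ 0, |vol(E_k(A,t) ∩ U) − vol(E_k(Q,t) ∩ U)| ≤ m · (4π/3)(3δt² + δ³/4), where E_k(S,t) is the set of points contained in exactly k closed balls of radius t around points of S. -/

import Mathlib

open MeasureTheory Set Metric Pointwise

noncomputable section

/-- 3-dimensional Euclidean space. -/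
abbrev E3 := EuclideanSpace ℝ (Fin 3)

/-- The lattice generated by the vectors `b 0, b 1, b 2`. -/
def lat (b : Fin 3 → E3) : Set E3 := {x | ∃ n : Fin 3 → ℤ, x = ∑ i, (n i : ℝ) • b i}

/-- The unit cell spanned by the vectors `b 0, b 1, b 2`. -/
def cell (b : Fin 3 → E3) : Set E3 :=
  {x | ∃ c : Fin 3 → ℝ, (∀ i, 0 ≤ c i ∧ c i < 1) ∧ x = ∑ i, c i • b i}

/-- The `k`-fold cover: points lying in at least `k` closed balls of radius `t`
centered at points of `A`. -/
def coverGE (A : Set E3) (t : ℝ) (k : ℕ) : Set E3 :=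
  {x | ∃ F : Finset E3, F.card = k ∧ ↑F ⊆ A ∧ ∀ a ∈ F, dist x a ≤ t}

/-- Points lying in exactly `k` closed balls of radius `t` centered at points of `A`. -/
def coverEQ (A : Set E3) (t : ℝ) (k : ℕ) : Set E3 :=
  {x | ∃ F : Finset E3, ↑F = {a ∈ A | dist x a ≤ t} ∧ F.card = k}

/-- The `k`-th Dirichlet–Voronoi domain of `a` in `A` (with `D_0 = ∅`). -/
def DV (A : Set E3) (a : E3) : ℕ → Set E3
  | 0 => ∅
  | (k+1) => {x | ({b ∈ A | dist x b < dist x a}).ncard ≤ k}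

/-- The `k`-th Brillouin zone of `a` in `A`. -/
def BZ (A : Set E3) (a : E3) (k : ℕ) : Set E3 := DV A a k \ DV A a (k-1)


namespace ECVP

open Submodule Bornology ZSpan

lemma lat_eq_span (b : Fin 3 → E3) :
    lat b = (Submodule.span ℤ (Set.range b) : Submodule ℤ E3) := by
  ext x
  simp only [lat, Set.mem_setOf_eq, SetLike.mem_coe, mem_span_range_iff_exists_fun]
  constructor
  · rintro ⟨n, rfl⟩
    exact ⟨n, by simp [Int.cast_smul_eq_zsmul]⟩
  · rintro ⟨n, rfl⟩
    exact ⟨n, by simp [Int.cast_smul_eq_zsmul]⟩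


lemma cell_eq_fd (B : Module.Basis (Fin 3) ℝ E3) : cell ⇑B = fundamentalDomain B := by
  ext x
  simp only [cell, Set.mem_setOf_eq, mem_fundamentalDomain, Set.mem_Ico]
  constructor
  · rintro ⟨c, hc, rfl⟩ i
    rw [B.repr_sum_self]
    exact hc i
  · intro h
    exact ⟨fun i => B.repr x i, h, (B.sum_repr x).symm⟩


variable (B : Module.Basis (Fin 3) ℝ E3)

/-- number of lattice translates of `c` within distance `t` of `x`. -/
def mult (t : ℝ) (c x : E3) : ℕ := (lat ⇑B ∩ closedBall (x - c) t).ncard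


lemma lat_finite_inter (z : E3) (t : ℝ) : (lat ⇑B ∩ closedBall z t).Finite := by
  rw [lat_eq_span, Set.inter_comm]
  haveI h1 : DiscreteTopology ((span ℤ (Set.range ⇑B) : Submodule ℤ E3) : Set E3) := by
    have : DiscreteTopology (span ℤ (Set.range ⇑B)) := inferInstance
    exact this
  have h2 : IsClosed ((span ℤ (Set.range ⇑B) : Submodule ℤ E3) : Set E3) := by
    haveI : DiscreteTopology (span ℤ (Set.range ⇑B)).toAddSubgroup :=
      inferInstanceAs (DiscreteTopology (span ℤ (Set.range ⇑B)))
    exact AddSubgroup.isClosed_of_discrete (H := (span ℤ (Set.range ⇑B)).toAddSubgroup)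
  exact Metric.finite_isBounded_inter_isClosed (isDiscrete_iff_discreteTopology.mpr h1) isBounded_closedBall h2


/-- distinct points of the unit cell generate disjoint lattice cosets. -/
lemma coset_eq {a a' l l' : E3} (ha : a ∈ cell ⇑B) (ha' : a' ∈ cell ⇑B)
    (hl : l ∈ lat ⇑B) (hl' : l' ∈ lat ⇑B) (h : a + l = a' + l') : a = a' := by
  rw [lat_eq_span] at hl hl'
  have hFa : a ∈ fundamentalDomain B := by rw [← cell_eq_fd]; exact ha
  have hFa' : a' ∈ fundamentalDomain B := by rw [← cell_eq_fd]; exact ha'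
  obtain ⟨v, -, huniq⟩ := exist_unique_vadd_mem_fundamentalDomain B a
  have h0 : (0 : span ℤ (Set.range ⇑B)) +ᵥ a ∈ fundamentalDomain B := by
    simpa [zero_vadd] using hFa
  have hda : a' = (l - l') + a := by
    have : a + l - l' = a' := by rw [h]; abel
    rw [← this]; abel
  have hv : (⟨l - l', sub_mem hl hl'⟩ : span ℤ (Set.range ⇑B)) +ᵥ a ∈ fundamentalDomain B := by
    have he : (⟨l - l', sub_mem hl hl'⟩ : span ℤ (Set.range ⇑B)) +ᵥ a = (l - l') + a := by
      rfl
    rw [he, ← hda]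
    exact hFa'
  have : (⟨l - l', sub_mem hl hl'⟩ : span ℤ (Set.range ⇑B)) = 0 := (huniq _ hv).trans (huniq _ h0).symm
  have hll : l - l' = 0 := congrArg Subtype.val this
  have : l = l' := by rwa [sub_eq_zero] at hll
  rw [this] at h
  exact add_right_cancel h


lemma decomp (M : Finset E3) (hM : ↑M ⊆ cell ⇑B) (x : E3) (t : ℝ) :
    ((↑M + lat ⇑B) ∩ closedBall x t).Finite ∧
    ((↑M + lat ⇑B) ∩ closedBall x t).ncard = ∑ a ∈ M, mult B t a x := by
  classical
  induction M using Finset.induction_on with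
  | empty => simp
  | @insert a M ha ih =>
    have hMc : (↑M : Set E3) ⊆ cell ⇑B := fun y hy => hM (by simp [hy])
    have hac : a ∈ cell ⇑B := hM (by simp)
    obtain ⟨ihf, ihc⟩ := ih hMc
    have hsplit : ((↑(insert a M) : Set E3) + lat ⇑B) ∩ closedBall x t =
        ((fun l => a + l) '' (lat ⇑B ∩ closedBall (x - a) t)) ∪
          ((↑M + lat ⇑B) ∩ closedBall x t) := by
      ext y
      simp only [Finset.coe_insert, Set.insert_eq, Set.union_add, Set.mem_union,
        Set.union_inter_distrib_right, Set.mem_inter_iff, Set.singleton_add, Set.mem_image,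
        mem_closedBall]
      constructor
      · rintro (⟨⟨l, hl, rfl⟩, hy⟩ | h)
        · refine Or.inl ⟨l, ⟨hl, ?_⟩, rfl⟩
          rw [dist_eq_norm] at hy ⊢
          rw [show l - (x - a) = a + l - x by abel]
          exact hy
        · exact Or.inr h
      · rintro (⟨l, ⟨hl, hd⟩, rfl⟩ | h)
        · refine Or.inl ⟨⟨l, hl, rfl⟩, ?_⟩
          rw [dist_eq_norm] at hd ⊢
          rw [show a + l - x = l - (x - a) by abel]
          exact hd
        · exact Or.inr h
    have hfin1 : ((fun l => a + l) '' (lat ⇑B ∩ closedBall (x - a) t)).Finite :=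
      (lat_finite_inter B (x - a) t).image _
    have hdisj : Disjoint ((fun l => a + l) '' (lat ⇑B ∩ closedBall (x - a) t))
        ((↑M + lat ⇑B) ∩ closedBall x t) := by
      rw [Set.disjoint_left]
      rintro y ⟨l, ⟨hl, -⟩, rfl⟩ ⟨hy, -⟩
      obtain ⟨a', ha', l', hl', he⟩ := Set.mem_add.mp hy
      have : a = a' := coset_eq B hac (hMc ha') hl hl' he.symm
      rw [this] at ha
      exact ha ha'
    constructor
    · rw [hsplit]
      exact hfin1.union ihf
    · rw [hsplit, Set.ncard_union_eq hdisj hfin1 ihf,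
        Set.ncard_image_of_injective _ (add_right_injective a),
        Finset.sum_insert ha, ihc]
      rfl


lemma coverEQ_char (M : Finset E3) (hM : ↑M ⊆ cell ⇑B) (t : ℝ) (k : ℕ) :
    coverEQ (↑M + lat ⇑B) t k = {x | ∑ a ∈ M, mult B t a x = k} := by
  ext x
  have hset : {s ∈ (↑M + lat ⇑B) | dist x s ≤ t} = (↑M + lat ⇑B) ∩ closedBall x t := by
    ext y
    simp only [Set.mem_setOf_eq, Set.mem_inter_iff, mem_closedBall, dist_comm]
  obtain ⟨hfin, hcard⟩ := decomp B M hM x t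
  simp only [coverEQ, Set.mem_setOf_eq, hset]
  constructor
  · rintro ⟨F, hF, rfl⟩
    rw [← hcard, ← hF, Set.ncard_coe_finset]
  · intro h
    refine ⟨hfin.toFinset, by simp, ?_⟩
    rw [← Set.ncard_eq_toFinset_card _ hfin, hcard, h]


lemma mult_eq (t : ℝ) (c c' x : E3)
    (h : ∀ l ∈ lat ⇑B, dist x (c + l) ≤ t ↔ dist x (c' + l) ≤ t) :
    mult B t c x = mult B t c' x := by
  unfold mult
  congr 1
  ext l
  simp only [Set.mem_inter_iff, mem_closedBall]
  refine and_congr_right fun hl => ?_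
  have e1 : dist l (x - c) = dist x (c + l) := by
    rw [dist_eq_norm, dist_eq_norm, show l - (x - c) = -(x - (c + l)) by abel, norm_neg]
  have e2 : dist l (x - c') = dist x (c' + l) := by
    rw [dist_eq_norm, dist_eq_norm, show l - (x - c') = -(x - (c' + l)) by abel, norm_neg]
  rw [e1, e2]
  exact h l hl


lemma periodize (S : Set E3) :
    volume ((S + lat ⇑B) ∩ fundamentalDomain B) ≤ volume S := by
  have hcov : (S + lat ⇑B) ∩ fundamentalDomain B ⊆
      ⋃ (l : span ℤ (Set.range ⇑B)), (((l : E3) +ᵥ S) ∩ fundamentalDomain B) := by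
    rintro y ⟨hy, hyF⟩
    obtain ⟨s, hs, l, hl, rfl⟩ := Set.mem_add.mp hy
    rw [lat_eq_span] at hl
    refine Set.mem_iUnion.mpr ⟨⟨l, hl⟩, ⟨⟨s, hs, ?_⟩, hyF⟩⟩
    simp only [vadd_eq_add]
    abel
  have hstep : ∀ l : span ℤ (Set.range ⇑B),
      volume (((l : E3) +ᵥ S) ∩ fundamentalDomain B) =
      volume (S ∩ ((-(l : E3)) +ᵥ fundamentalDomain B)) := by
    intro l
    have hset : ((l : E3) +ᵥ S) ∩ fundamentalDomain B =
        (l : E3) +ᵥ (S ∩ ((-(l : E3)) +ᵥ fundamentalDomain B)) := by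
      ext y
      simp only [Set.mem_inter_iff, Set.mem_vadd_set, vadd_eq_add]
      constructor
      · rintro ⟨⟨s, hs, rfl⟩, hyF⟩
        exact ⟨s, ⟨hs, ⟨(l : E3) + s, hyF, by abel⟩⟩, rfl⟩
      · rintro ⟨s, ⟨hs, ⟨f, hf, hfe⟩⟩, rfl⟩
        have : f = (l : E3) + s := by
          have : -(l : E3) + f = s := hfe
          rw [← this]; abel
        rw [this] at hf
        exact ⟨⟨s, hs, rfl⟩, hf⟩
    rw [hset, measure_vadd]
  calc volume ((S + lat ⇑B) ∩ fundamentalDomain B)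
      ≤ ∑' (l : span ℤ (Set.range ⇑B)),
          volume (((l : E3) +ᵥ S) ∩ fundamentalDomain B) :=
        (measure_mono hcov).trans (measure_iUnion_le _)
    _ = ∑' (l : span ℤ (Set.range ⇑B)),
          volume (S ∩ ((-(l : E3)) +ᵥ fundamentalDomain B)) := by
        exact tsum_congr hstep
    _ = ∑' (l : span ℤ (Set.range ⇑B)),
          volume (S ∩ ((l : E3) +ᵥ fundamentalDomain B)) := by
        refine ((Equiv.neg (span ℤ (Set.range ⇑B))).tsum_eq _).symm.trans ?_
        refine tsum_congr fun l => ?_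
        congr 2
        simp
    _ = volume S := by
        haveI : MeasurableVAdd (span ℤ (Set.range ⇑B)) E3 :=
          (inferInstance : MeasurableVAdd (span ℤ (Set.range ⇑B)).toAddSubgroup E3)
        haveI : VAddInvariantMeasure (span ℤ (Set.range ⇑B)) E3 volume :=
          (inferInstance : VAddInvariantMeasure (span ℤ (Set.range ⇑B)).toAddSubgroup E3 volume)
        have h := (ZSpan.isAddFundamentalDomain B volume).measure_eq_tsum' S
        rw [h]
        rfl


lemma vol_diff_le (Es Es' X U : Set E3) (hsub : ∀ x, x ∉ X → (x ∈ Es ↔ x ∈ Es'))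
    (hU : volume U ≠ ⊤) :
    |(volume (Es ∩ U)).toReal - (volume (Es' ∩ U)).toReal| ≤ (volume (X ∩ U)).toReal := by
  have key : ∀ P P' : Set E3, (∀ x, x ∉ X → (x ∈ P ↔ x ∈ P')) →
      volume (P ∩ U) ≤ volume (P' ∩ U) + volume (X ∩ U) := by
    intro P P' hPP
    refine (measure_mono ?_).trans (measure_union_le _ _)
    rintro x ⟨hxP, hxU⟩
    by_cases hX : x ∈ X
    · exact Or.inr ⟨hX, hxU⟩
    · exact Or.inl ⟨(hPP x hX).mp hxP, hxU⟩
  have h1 := key Es Es' hsub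
  have h2 := key Es' Es fun x hx => (hsub x hx).symm
  have fE : volume (Es ∩ U) ≠ ⊤ :=
    ((measure_mono Set.inter_subset_right).trans_lt (lt_top_iff_ne_top.mpr hU)).ne
  have fE' : volume (Es' ∩ U) ≠ ⊤ :=
    ((measure_mono Set.inter_subset_right).trans_lt (lt_top_iff_ne_top.mpr hU)).ne
  have fX : volume (X ∩ U) ≠ ⊤ :=
    ((measure_mono Set.inter_subset_right).trans_lt (lt_top_iff_ne_top.mpr hU)).ne
  rw [abs_sub_le_iff]
  constructor
  · have := ENNReal.toReal_mono (by rw [ENNReal.add_ne_top]; exact ⟨fE', fX⟩) h1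
    rw [ENNReal.toReal_add fE' fX] at this
    linarith
  · have := ENNReal.toReal_mono (by rw [ENNReal.add_ne_top]; exact ⟨fE, fX⟩) h2
    rw [ENNReal.toReal_add fE fX] at this
    linarith


lemma tele (g : ℕ → ℝ) (n : ℕ) :
    |g 0 - g n| ≤ ∑ j ∈ Finset.range n, |g j - g (j + 1)| := by
  induction n with
  | zero => simp
  | succ n ih =>
    rw [Finset.sum_range_succ]
    have h := abs_sub_le (g 0) (g n) (g (n + 1))
    linarith


lemma vol_cb (x : E3) (r : ℝ) (hr : 0 ≤ r) :
    volume (closedBall x r) = ENNReal.ofReal (4 * Real.pi / 3 * r ^ 3) := by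
  rw [EuclideanSpace.volume_closedBall]
  have hcard : Fintype.card (Fin 3) = 3 := by simp
  rw [hcard]
  have hg : Real.Gamma ((3 : ℕ) / 2 + 1) = 3 / 4 * Real.sqrt Real.pi := by
    have h1 : ((3 : ℕ) : ℝ) / 2 + 1 = (1 / 2 + 1) + 1 := by norm_num
    rw [h1, Real.Gamma_add_one (by positivity), Real.Gamma_add_one (by norm_num),
      Real.Gamma_one_half_eq]
    ring
  have hsq : Real.sqrt Real.pi ^ 3 = Real.pi * Real.sqrt Real.pi := by
    have : Real.sqrt Real.pi * Real.sqrt Real.pi = Real.pi :=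
      Real.mul_self_sqrt Real.pi_pos.le
    calc Real.sqrt Real.pi ^ 3 = (Real.sqrt Real.pi * Real.sqrt Real.pi) * Real.sqrt Real.pi := by ring
      _ = Real.pi * Real.sqrt Real.pi := by rw [this]
  have hs : Real.sqrt Real.pi > 0 := Real.sqrt_pos.mpr Real.pi_pos
  rw [hg, hsq, ← ENNReal.ofReal_pow hr, ← ENNReal.ofReal_mul (by positivity)]
  congr 1
  field_simp


lemma symdiff_vol (a q : E3) (t δ : ℝ) (ht : 0 ≤ t) (hδ : 0 ≤ δ) (hd : dist a q ≤ δ) :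
    volume ((closedBall a t \ closedBall q t) ∪ (closedBall q t \ closedBall a t)) ≤
      ENNReal.ofReal (4 * Real.pi / 3 * (3 * δ * t ^ 2 + δ ^ 3 / 4)) := by
  set c := midpoint ℝ a q with hc
  have hac : dist a c ≤ δ / 2 := by
    rw [hc, dist_left_midpoint]
    simp only [Real.norm_ofNat]
    linarith
  have hqc : dist q c ≤ δ / 2 := by
    rw [hc, dist_right_midpoint]
    simp only [Real.norm_ofNat]
    linarith
  have hsub : (closedBall a t \ closedBall q t) ∪ (closedBall q t \ closedBall a t) ⊆
      closedBall c (t + δ / 2) \ closedBall c (t - δ / 2) := by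
    rintro x (⟨hin, hout⟩ | ⟨hin, hout⟩) <;>
      simp only [mem_closedBall, mem_diff, not_le] at hin hout ⊢ <;>
      constructor
    · exact (dist_triangle x a c).trans (by linarith)
    · have := dist_triangle x q c
      have h2 := dist_triangle x c q
      have h3 : dist c q = dist q c := dist_comm c q
      linarith
    · exact (dist_triangle x q c).trans (by linarith)
    · have h2 := dist_triangle x c a
      have h3 : dist c a = dist a c := dist_comm c a
      linarith
  refine (measure_mono hsub).trans ?_
  by_cases hcase : δ / 2 ≤ t
  · have hsmall : (0:ℝ) ≤ t - δ / 2 := by linarith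
    rw [measure_diff (closedBall_subset_closedBall (by linarith))
        measurableSet_closedBall.nullMeasurableSet
        (measure_closedBall_lt_top).ne,
      vol_cb _ _ (by linarith), vol_cb _ _ hsmall,
      ← ENNReal.ofReal_sub _ (by positivity)]
    apply ENNReal.ofReal_le_ofReal
    nlinarith [Real.pi_pos]
  · refine (measure_mono diff_subset).trans ?_
    rw [vol_cb _ _ (by linarith)]
    apply ENNReal.ofReal_le_ofReal
    have key : 3 * δ * t ^ 2 + δ ^ 3 / 4 - (t + δ / 2) ^ 3 = ((δ - 2 * t) / 2) ^ 3 := by ring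
    nlinarith [Real.pi_pos, pow_nonneg (by linarith : (0:ℝ) ≤ (δ - 2*t)/2) 3]


end ECVP

open ECVP Submodule ZSpan Bornology

theorem exact_cover_volume_perturbation (b : Fin 3 → E3) (hb : LinearIndependent ℝ b)
    (MA MQ : Finset E3) (hMA : ↑MA ⊆ cell b) (hMQ : ↑MQ ⊆ cell b)
    (m : ℕ) (hm : MA.card = m) (hm' : MQ.card = m)
    (A Q : Set E3) (hA : A = ↑MA + lat b) (hQ : Q = ↑MQ + lat b)
    (γ : E3 → E3) (hγ : Set.BijOn γ ↑MA ↑MQ)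
    (δ : ℝ) (hδ : 0 ≤ δ) (hclose : ∀ a ∈ MA, dist a (γ a) ≤ δ)
    (k : ℕ) (t : ℝ) (ht : 0 ≤ t) :
    |(volume (coverEQ A t k ∩ cell b)).toReal -
        (volume (coverEQ Q t k ∩ cell b)).toReal| ≤
      (m : ℝ) * ((4 * Real.pi / 3) * (3 * δ * t ^ 2 + δ ^ 3 / 4)) := by
  classical
  have h3 : Fintype.card (Fin 3) = Module.finrank ℝ E3 := by
    simp [finrank_euclideanSpace]
  set B : Module.Basis (Fin 3) ℝ E3 := basisOfLinearIndependentOfCardEqFinrank hb h3 with hBdef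
  have hBb : ⇑B = b := coe_basisOfLinearIndependentOfCardEqFinrank hb h3
  rw [← hBb] at hMA hMQ hA hQ ⊢
  set C : ℝ := 4 * Real.pi / 3 * (3 * δ * t ^ 2 + δ ^ 3 / 4) with hC
  have hC0 : 0 ≤ C := by
    have := Real.pi_pos
    positivity
  have hUfin : volume (cell ⇑B) ≠ ⊤ := by
    rw [cell_eq_fd B]
    exact ((measure_mono subset_closure).trans_lt
      (fundamentalDomain_isBounded B).isCompact_closure.measure_lt_top).ne
  -- enumeration of MA
  have hmA : MA.card = m := hm
  let e : Fin m ≃ {x // x ∈ MA} := (MA.equivFin.trans (finCongr hm)).symm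
  let av : Fin m → E3 := fun i => ↑(e i)
  let qv : Fin m → E3 := fun i => γ (av i)
  have hav : ∀ i, av i ∈ MA := fun i => (e i).2
  have hqv : ∀ i, qv i ∈ MQ := fun i => hγ.mapsTo (hav i)
  have havinj : Function.Injective av := fun i j h =>
    e.injective (Subtype.ext h)
  -- configurations
  let cfg : ℕ → Fin m → E3 := fun j i => if (i : ℕ) < j then qv i else av i
  let g : ℕ → ℝ := fun j =>
    (volume ({x | ∑ i, mult B t (cfg j i) x = k} ∩ cell ⇑B)).toReal
  -- endpoint A
  have hend0 : (volume (coverEQ A t k ∩ cell ⇑B)).toReal = g 0 := by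
    have hc0 : cfg 0 = av := by
      funext i; simp [cfg]
    rw [hA, coverEQ_char B MA hMA t k]
    have hsum : ∀ x, (∑ a ∈ MA, mult B t a x) = ∑ i, mult B t (cfg 0 i) x := by
      intro x
      rw [hc0, ← Finset.sum_coe_sort MA (fun a => mult B t a x),
        ← Equiv.sum_comp e (fun s : {y // y ∈ MA} => mult B t (↑s) x)]
    simp only [g]
    congr 2
    ext x
    simp only [Set.mem_setOf_eq, hsum]
  -- endpoint Q
  have hendm : (volume (coverEQ Q t k ∩ cell ⇑B)).toReal = g m := by
    have hcm : cfg m = qv := by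
      funext i; simp [cfg, i.isLt]
    rw [hQ, coverEQ_char B MQ hMQ t k]
    have hsum : ∀ x, (∑ a ∈ MQ, mult B t a x) = ∑ i, mult B t (cfg m i) x := by
      intro x
      rw [hcm]
      have h1 : ∑ a ∈ MA, mult B t (γ a) x = ∑ a ∈ MQ, mult B t a x := by
        refine Finset.sum_bij (fun a _ => γ a) (fun a ha => hγ.mapsTo ha) ?_ ?_ ?_
        · intro a ha a' ha' h
          exact hγ.injOn ha ha' h
        · intro q hq
          obtain ⟨a, ha, rfl⟩ := hγ.surjOn hq
          exact ⟨a, ha, rfl⟩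
        · intro a ha
          rfl
      rw [← h1, ← Finset.sum_coe_sort MA (fun a => mult B t (γ a) x),
        ← Equiv.sum_comp e (fun s : {y // y ∈ MA} => mult B t (γ ↑s) x)]
    simp only [g]
    congr 2
    ext x
    simp only [Set.mem_setOf_eq, hsum]
  rw [hend0, hendm]
  refine (tele g m).trans ?_
  have hstep : ∀ j ∈ Finset.range m, |g j - g (j + 1)| ≤ C := by
    intro j hj
    have hjm : j < m := Finset.mem_range.mp hj
    set jj : Fin m := ⟨j, hjm⟩ with hjj
    set X : Set E3 := ((closedBall (av jj) t \ closedBall (qv jj) t) ∪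
        (closedBall (qv jj) t \ closedBall (av jj) t)) + lat ⇑B with hX
    have hiff : ∀ x, x ∉ X →
        (x ∈ {x | ∑ i, mult B t (cfg j i) x = k} ↔
         x ∈ {x | ∑ i, mult B t (cfg (j + 1) i) x = k}) := by
      intro x hx
      have hsum : ∑ i, mult B t (cfg j i) x = ∑ i, mult B t (cfg (j + 1) i) x := by
        refine Finset.sum_congr rfl fun i _ => ?_
        by_cases hi : i = jj
        · rw [hi]
          have h1 : cfg j jj = av jj := by
            simp only [cfg]
            rw [if_neg (by simp [hjj])]
          have h2 : cfg (j + 1) jj = qv jj := by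
            simp only [cfg]
            rw [if_pos (by simp [hjj])]
          rw [h1, h2]
          refine mult_eq B t _ _ x fun l hl => ?_
          have key : ∀ p : E3, dist (x - l) p = dist x (p + l) := by
            intro p
            rw [dist_eq_norm, dist_eq_norm, show x - l - p = x - (p + l) by abel]
          constructor
          · intro hal
            by_contra hql
            refine hx (Set.mem_add.mpr ⟨x - l, Or.inl ⟨?_, ?_⟩, l, hl, by abel⟩)
            · rw [mem_closedBall, key]
              exact hal
            · intro hcon
              rw [mem_closedBall, key] at hcon
              exact hql hcon
          · intro hql
            by_contra hal
            refine hx (Set.mem_add.mpr ⟨x - l, Or.inr ⟨?_, ?_⟩, l, hl, by abel⟩)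
            · rw [mem_closedBall, key]
              exact hql
            · intro hcon
              rw [mem_closedBall, key] at hcon
              exact hal hcon
        · have hne : (i : ℕ) ≠ j := fun h => hi (Fin.ext h)
          have hcc : cfg j i = cfg (j + 1) i := by
            simp only [cfg]
            by_cases h : (i : ℕ) < j
            · rw [if_pos h, if_pos (by omega)]
            · rw [if_neg h, if_neg (by omega)]
          rw [hcc]
      simp only [Set.mem_setOf_eq, hsum]
    have h1 : |g j - g (j + 1)| ≤ (volume (X ∩ cell ⇑B)).toReal :=
      vol_diff_le _ _ X (cell ⇑B) hiff hUfin
    refine h1.trans ?_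
    have h2 : volume (X ∩ cell ⇑B) ≤ ENNReal.ofReal C := by
      rw [hX, cell_eq_fd B]
      refine (periodize B _).trans ?_
      exact symdiff_vol (av jj) (qv jj) t δ ht hδ (hclose _ (hav jj))
    calc (volume (X ∩ cell ⇑B)).toReal ≤ (ENNReal.ofReal C).toReal :=
          ENNReal.toReal_mono ENNReal.ofReal_ne_top h2
      _ = C := ENNReal.toReal_ofReal hC0
  refine (Finset.sum_le_sum hstep).trans ?_
  rw [Finset.sum_const, Finset.card_range, nsmul_eq_mul]
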